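/- arXiv:2105.10550 — 8 statements merged into one kernel-verified Lean document; each statement's English description precedes it below -/
import Mathlib

section
/- Let θ = (θ_g, X_g)_{g∈G} be a topological partial action of a topological group G on a compact Hausdorff space X. For each g ∈ G set ⟨X_g⟩ = {A ∈ 2^X : A ⊆ X_g} and define 2^{θ_g} : ⟨X_{g⁻¹}⟩ → ⟨X_g⟩ by 2^{θ_g}(A) = θ_g(A). Then 2^θ = (2^{θ_g}, ⟨X_g⟩)_{g∈G} is a topological partial action of G on the hyperspace 2^X: each ⟨X_g⟩ is open in 2^X, each 2^{θ_g} is a homeomorphism, ⟨X_1⟩ = 2^X with 2^{θ_1} the identity, 2^{θ_g}(⟨X_{g⁻¹}⟩ ∩ ⟨X_h⟩) = ⟨X_g⟩ ∩ ⟨X_{gh}⟩, and 2^{θ_g}(2^{θ_h}(A)) = 2^{θ_{gh}}(A) for all A ∈ ⟨X_{h⁻¹}⟩ ∩ ⟨X_{(gh)⁻¹}⟩ and all g,h ∈ G. -/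
/-- The hyperspace `2^X` of nonempty compact subsets of `X`. -/
structure NCompact (X : Type*) [TopologicalSpace X] where
  carrier : Set X
  isCompact' : IsCompact carrier
  nonempty' : carrier.Nonempty

/-- The Vietoris topology on the hyperspace `2^X`, generated by the subbasic open sets
`{A | A ⊆ U}` and `{A | A ∩ U ≠ ∅}` for `U` open in `X`. -/
instance NCompact.instTopologicalSpace (X : Type*) [TopologicalSpace X] :
    TopologicalSpace (NCompact X) :=
  TopologicalSpace.generateFrom
    {S | ∃ U : Set X, IsOpen U ∧
      (S = {A : NCompact X | A.carrier ⊆ U} ∨ S = {A : NCompact X | (A.carrier ∩ U).Nonempty})}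

/-- A topological partial action `θ = (θ_g, X_g)_{g ∈ G}` of a topological group `G` on a
topological space `X`: a family of open sets `dom g = X_g` and maps `map g = θ_g` which
restrict to homeomorphisms `θ_g : X_{g⁻¹} → X_g` (with inverse `θ_{g⁻¹}`), such that
`X_1 = X`, `θ_1 = id`, `θ_g(X_{g⁻¹} ∩ X_h) = X_g ∩ X_{gh}` and `θ_g ∘ θ_h = θ_{gh}` on
`X_{h⁻¹} ∩ X_{(gh)⁻¹}`.  (The values of `map g` outside `dom g⁻¹` are irrelevant junk.) -/
structure TopPartialAction (G : Type*) (X : Type*) [Group G] [TopologicalSpace G]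
    [TopologicalSpace X] where
  dom : G → Set X
  map : G → X → X
  isOpen_dom : ∀ g, IsOpen (dom g)
  dom_one : dom 1 = Set.univ
  map_one : ∀ x, map 1 x = x
  image_dom : ∀ g, map g '' dom g⁻¹ = dom g
  map_inv : ∀ g, ∀ x ∈ dom g⁻¹, map g⁻¹ (map g x) = x
  image_inter : ∀ g h, map g '' (dom g⁻¹ ∩ dom h) = dom g ∩ dom (g * h)
  map_mul : ∀ g h, ∀ x ∈ dom h⁻¹ ∩ dom (g * h)⁻¹, map g (map h x) = map (g * h) x
  continuousOn_map : ∀ g, ContinuousOn (map g) (dom g⁻¹)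

namespace HyperAux

variable {G X : Type*} [Group G] [TopologicalSpace G] [TopologicalSpace X]

theorem NCompact.ext' {A B : NCompact X} (h : A.carrier = B.carrier) : A = B := by
  cases A; cases B; simpa using h

theorem isOpen_sub {U : Set X} (hU : IsOpen U) :
    IsOpen {A : NCompact X | A.carrier ⊆ U} :=
  TopologicalSpace.isOpen_generateFrom_of_mem ⟨U, hU, Or.inl rfl⟩

theorem isOpen_hit {U : Set X} (hU : IsOpen U) :
    IsOpen {A : NCompact X | (A.carrier ∩ U).Nonempty} :=
  TopologicalSpace.isOpen_generateFrom_of_mem ⟨U, hU, Or.inr rfl⟩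

variable (θ : TopPartialAction G X)

open Classical in
/-- The induced map `2^{θ_g}` on the hyperspace, with junk value `A` off the domain. -/
noncomputable def hmap (g : G) (A : NCompact X) : NCompact X :=
  if h : A.carrier ⊆ θ.dom g⁻¹ then
    ⟨θ.map g '' A.carrier,
      A.isCompact'.image_of_continuousOn ((θ.continuousOn_map g).mono h),
      A.nonempty'.image _⟩
  else A

theorem hmap_carrier {g : G} {A : NCompact X} (h : A.carrier ⊆ θ.dom g⁻¹) :
    (hmap θ g A).carrier = θ.map g '' A.carrier := by
  rw [hmap, dif_pos h]

theorem hmap_one (A : NCompact X) : hmap θ 1 A = A := by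
  apply NCompact.ext'
  rw [hmap_carrier θ (by simp [θ.dom_one])]
  have : ∀ x ∈ A.carrier, θ.map 1 x = x := fun x _ => θ.map_one x
  rw [Set.image_congr this, Set.image_id']

theorem sub_dom_of_sub {g : G} {A : NCompact X} (h : A.carrier ⊆ θ.dom g⁻¹) :
    (hmap θ g A).carrier ⊆ θ.dom g := by
  rw [hmap_carrier θ h, ← θ.image_dom g]
  exact Set.image_mono h

theorem hmap_inv {g : G} {A : NCompact X} (h : A.carrier ⊆ θ.dom g⁻¹) :
    hmap θ g⁻¹ (hmap θ g A) = A := by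
  apply NCompact.ext'
  have h1 : (hmap θ g A).carrier ⊆ θ.dom g⁻¹⁻¹ := by
    simpa using sub_dom_of_sub θ h
  rw [hmap_carrier θ h1, hmap_carrier θ h, Set.image_image]
  have : ∀ x ∈ A.carrier, θ.map g⁻¹ (θ.map g x) = x := fun x hx => θ.map_inv g x (h hx)
  rw [Set.image_congr this, Set.image_id']

theorem hmap_image_dom (g : G) :
    hmap θ g '' {A : NCompact X | A.carrier ⊆ θ.dom g⁻¹} =
      {A : NCompact X | A.carrier ⊆ θ.dom g} := by
  ext B
  constructor
  · rintro ⟨A, hA, rfl⟩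
    exact sub_dom_of_sub θ hA
  · intro hB
    have hB' : B.carrier ⊆ θ.dom g⁻¹⁻¹ := by simpa using hB
    refine ⟨hmap θ g⁻¹ B, ?_, ?_⟩
    · have := sub_dom_of_sub θ (g := g⁻¹) hB'
      simpa using this
    · simpa using hmap_inv θ (g := g⁻¹) hB'

theorem hmap_image_inter (g h : G) :
    hmap θ g '' ({A : NCompact X | A.carrier ⊆ θ.dom g⁻¹} ∩
        {A : NCompact X | A.carrier ⊆ θ.dom h}) =
      {A : NCompact X | A.carrier ⊆ θ.dom g} ∩
        {A : NCompact X | A.carrier ⊆ θ.dom (g * h)} := by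
  have key := θ.image_inter g h
  ext B
  constructor
  · rintro ⟨A, ⟨hA1, hA2⟩, rfl⟩
    have : θ.map g '' A.carrier ⊆ θ.dom g ∩ θ.dom (g * h) := by
      rw [← key]
      exact Set.image_mono (Set.subset_inter hA1 hA2)
    rw [Set.subset_inter_iff] at this
    exact ⟨by rw [Set.mem_setOf_eq, hmap_carrier θ hA1]; exact this.1,
           by rw [Set.mem_setOf_eq, hmap_carrier θ hA1]; exact this.2⟩
  · rintro ⟨hB1, hB2⟩
    have hB' : B.carrier ⊆ θ.dom g⁻¹⁻¹ := by simpa using hB1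
    have key2 := θ.image_inter g⁻¹ (g * h)
    rw [inv_inv, inv_mul_cancel_left] at key2
    refine ⟨hmap θ g⁻¹ B, ⟨?_, ?_⟩, by simpa using hmap_inv θ (g := g⁻¹) hB'⟩
    · have := sub_dom_of_sub θ (g := g⁻¹) hB'
      simpa using this
    · rw [Set.mem_setOf_eq, hmap_carrier θ hB']
      have : θ.map g⁻¹ '' B.carrier ⊆ θ.map g⁻¹ '' (θ.dom g ∩ θ.dom (g * h)) :=
        Set.image_mono (Set.subset_inter hB1 hB2)
      rw [key2] at this
      exact this.trans Set.inter_subset_right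

theorem hmap_mul (g h : G) (A : NCompact X)
    (hA : A.carrier ⊆ θ.dom h⁻¹ ∩ θ.dom (g * h)⁻¹) :
    hmap θ g (hmap θ h A) = hmap θ (g * h) A := by
  rw [Set.subset_inter_iff] at hA
  obtain ⟨hA1, hA2⟩ := hA
  have e : h * (g * h)⁻¹ = g⁻¹ := by group
  have key : θ.map h '' A.carrier ⊆ θ.dom g⁻¹ := by
    have := θ.image_inter h (g * h)⁻¹
    rw [e] at this
    have h2 : θ.map h '' A.carrier ⊆ θ.map h '' (θ.dom h⁻¹ ∩ θ.dom (g * h)⁻¹) :=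
      Set.image_mono (Set.subset_inter hA1 hA2)
    rw [this] at h2
    exact h2.trans Set.inter_subset_right
  have key' : (hmap θ h A).carrier ⊆ θ.dom g⁻¹ := by rw [hmap_carrier θ hA1]; exact key
  apply NCompact.ext'
  rw [hmap_carrier θ key', hmap_carrier θ hA1, hmap_carrier θ hA2, Set.image_image]
  exact Set.image_congr fun x hx => θ.map_mul g h x ⟨hA1 hx, hA2 hx⟩

theorem hmap_continuousOn (g : G) :
    ContinuousOn (hmap θ g) {A : NCompact X | A.carrier ⊆ θ.dom g⁻¹} := by
  set D : Set (NCompact X) := {A : NCompact X | A.carrier ⊆ θ.dom g⁻¹} with hD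
  rw [continuousOn_iff_continuous_restrict]
  apply continuous_generateFrom_iff.mpr
  rintro S ⟨U, hU, hS | hS⟩ <;> subst hS
  · set V : Set X := θ.dom g⁻¹ ∩ θ.map g ⁻¹' U with hV
    have hVopen : IsOpen V :=
      (θ.continuousOn_map g).isOpen_inter_preimage (θ.isOpen_dom _) hU
    have heq : D.domRestrict (hmap θ g) ⁻¹' {B : NCompact X | B.carrier ⊆ U} =
        Subtype.val ⁻¹' {A : NCompact X | A.carrier ⊆ V} := by
      ext ⟨A, hA⟩
      simp only [Set.domRestrict, Set.mem_preimage, Set.mem_setOf_eq, hmap_carrier θ hA]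
      constructor
      · intro hsub
        exact Set.subset_inter hA (Set.image_subset_iff.mp hsub)
      · intro hsub
        exact Set.image_subset_iff.mpr (hsub.trans Set.inter_subset_right)
    rw [heq]
    exact (isOpen_sub hVopen).preimage continuous_subtype_val
  · set V : Set X := θ.dom g⁻¹ ∩ θ.map g ⁻¹' U with hV
    have hVopen : IsOpen V :=
      (θ.continuousOn_map g).isOpen_inter_preimage (θ.isOpen_dom _) hU
    have heq : D.domRestrict (hmap θ g) ⁻¹' {B : NCompact X | (B.carrier ∩ U).Nonempty} =
        Subtype.val ⁻¹' {A : NCompact X | (A.carrier ∩ V).Nonempty} := by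
      ext ⟨A, hA⟩
      simp only [Set.domRestrict, Set.mem_preimage, Set.mem_setOf_eq, hmap_carrier θ hA]
      constructor
      · rintro ⟨y, ⟨x, hxA, rfl⟩, hyU⟩
        exact ⟨x, hxA, hA hxA, hyU⟩
      · rintro ⟨x, hxA, _, hxU⟩
        exact ⟨θ.map g x, ⟨x, hxA, rfl⟩, hxU⟩
    rw [heq]
    exact (isOpen_hit hVopen).preimage continuous_subtype_val

end HyperAux

/-- Let `θ = (θ_g, X_g)_{g∈G}` be a topological partial action of a topological group `G` on a
compact Hausdorff space `X`.  Then the family `2^θ = (2^{θ_g}, ⟨X_g⟩)_{g∈G}`, where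
`⟨X_g⟩ = {A ∈ 2^X | A ⊆ X_g}` and `2^{θ_g}(A) = θ_g(A)` for `A ∈ ⟨X_{g⁻¹}⟩`, is a
topological partial action of `G` on the hyperspace `2^X`: each `⟨X_g⟩` is open, each
`2^{θ_g} : ⟨X_{g⁻¹}⟩ → ⟨X_g⟩` is a homeomorphism, `⟨X_1⟩ = 2^X` with `2^{θ_1}` the identity,
`2^{θ_g}(⟨X_{g⁻¹}⟩ ∩ ⟨X_h⟩) = ⟨X_g⟩ ∩ ⟨X_{gh}⟩`, and `2^{θ_g} ∘ 2^{θ_h} = 2^{θ_{gh}}` on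
`⟨X_{h⁻¹}⟩ ∩ ⟨X_{(gh)⁻¹}⟩` — all of which is packaged in the existence of a
`TopPartialAction G (NCompact X)` whose domains are the `⟨X_g⟩` and whose maps act on the
domains by taking images under `θ_g`. -/
theorem inducedHyperspacePartialAction
    {G X : Type*} [Group G] [TopologicalSpace G] [IsTopologicalGroup G]
    [TopologicalSpace X] [CompactSpace X] [T2Space X]
    (θ : TopPartialAction G X) :
    ∃ Θ : TopPartialAction G (NCompact X),
      (∀ g, Θ.dom g = {A : NCompact X | A.carrier ⊆ θ.dom g}) ∧
      (∀ g, ∀ A : NCompact X, A.carrier ⊆ θ.dom g⁻¹ →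
        (Θ.map g A).carrier = θ.map g '' A.carrier) := by
  classical
  refine ⟨{
    dom := fun g => {A : NCompact X | A.carrier ⊆ θ.dom g}
    map := HyperAux.hmap θ
    isOpen_dom := fun g => HyperAux.isOpen_sub (θ.isOpen_dom g)
    dom_one := by ext A; simp [θ.dom_one, Set.subset_univ]
    map_one := HyperAux.hmap_one θ
    image_dom := HyperAux.hmap_image_dom θ
    map_inv := fun g A hA => HyperAux.hmap_inv θ hA
    image_inter := HyperAux.hmap_image_inter θ
    map_mul := fun g h A hA => HyperAux.hmap_mul θ g h A (Set.subset_inter hA.1 hA.2)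
    continuousOn_map := HyperAux.hmap_continuousOn θ }, fun g => rfl,
    fun g A hA => HyperAux.hmap_carrier θ hA⟩
end

section
/- Let θ = (θ_g, X_g)_{g∈G} be a topological partial action of a topological group G on a compact Hausdorff space X, and let 2^θ be the induced partial action on the hyperspace 2^X, with domain G∗2^X = {(g,A) ∈ G × 2^X : A ⊆ X_{g⁻¹}}. If the domain G∗X = {(g,x) ∈ G × X : x ∈ X_{g⁻¹}} of θ is open in G × X, then G∗2^X is open in G × 2^X. -/
/-- Let `θ` be a topological partial action of a topological group `G` on a compact Hausdorff
space `X`.  If the domain `G∗X = {(g,x) | x ∈ X_{g⁻¹}}` of `θ` is open in `G × X`, then the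
domain `G∗2^X = {(g,A) | A ⊆ X_{g⁻¹}}` of the induced partial action `2^θ` on the hyperspace
`2^X` is open in `G × 2^X`. -/
theorem isOpen_hyperspace_domain
    {G X : Type*} [Group G] [TopologicalSpace G] [IsTopologicalGroup G]
    [TopologicalSpace X] [CompactSpace X] [T2Space X]
    (θ : TopPartialAction G X)
    (hopen : IsOpen {p : G × X | p.2 ∈ θ.dom p.1⁻¹}) :
    IsOpen {p : G × NCompact X | p.2.carrier ⊆ θ.dom p.1⁻¹} := by
  rw [isOpen_iff_mem_nhds]
  rintro ⟨g₀, A₀⟩ hA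
  have key : ∀ x ∈ A₀.carrier, ∃ V : Set G, ∃ U : Set X, IsOpen V ∧ IsOpen U ∧ g₀ ∈ V ∧
      x ∈ U ∧ ∀ g ∈ V, ∀ y ∈ U, y ∈ θ.dom g⁻¹ := by
    intro x hx
    have hmem : (g₀, x) ∈ {p : G × X | p.2 ∈ θ.dom p.1⁻¹} := hA hx
    rcases isOpen_prod_iff.mp hopen g₀ x hmem with ⟨V, U, hV, hU, hgV, hxU, hsub⟩
    exact ⟨V, U, hV, hU, hgV, hxU, fun g hg y hy => hsub (Set.mk_mem_prod hg hy)⟩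
  choose V U hV hU hgV hxU hsub using key
  obtain ⟨t, hcov⟩ := A₀.isCompact'.elim_nhds_subcover' (fun x hx => U x hx)
    (fun x hx => (hU x hx).mem_nhds (hxU x hx))
  set V' : Set G := ⋂ x ∈ t, V x x.2 with hV'def
  set U' : Set X := ⋃ x ∈ t, U x x.2 with hU'def
  have hV'open : IsOpen V' := isOpen_biInter_finset fun x _ => hV x x.2
  have hU'open : IsOpen U' := isOpen_biUnion fun x _ => hU x x.2
  have hgV' : g₀ ∈ V' := Set.mem_iInter₂.mpr fun x _ => hgV x x.2
  have hWopen : IsOpen {A : NCompact X | A.carrier ⊆ U'} := by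
    exact TopologicalSpace.isOpen_generateFrom_of_mem ⟨U', hU'open, Or.inl rfl⟩
  refine mem_nhds_iff.mpr ⟨V' ×ˢ {A : NCompact X | A.carrier ⊆ U'}, ?_,
    hV'open.prod hWopen, ⟨hgV', hcov⟩⟩
  rintro ⟨g, A⟩ ⟨hgVm, hAU⟩ x hx
  rcases Set.mem_iUnion₂.mp (hAU hx) with ⟨i, hi, hxi⟩
  exact hsub i i.2 g (Set.mem_iInter₂.mp hgVm i hi) x hxi
end

section
/- Let θ = (θ_g, X_g)_{g∈G} be a topological partial action of a topological group G on a compact Hausdorff space X, and let 2^θ be the induced partial action on the hyperspace 2^X. If the map θ : G∗X → X, (g,x) ↦ θ_g(x), is continuous on the domain G∗X = {(g,x) : x ∈ X_{g⁻¹}} with the subspace topology of G × X, then the map 2^θ : G∗2^X → 2^X, (g,A) ↦ θ_g(A), is continuous on G∗2^X = {(g,A) ∈ G × 2^X : A ⊆ X_{g⁻¹}} with the subspace topology of G × 2^X. -/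
/-- Pointwise continuity of a partial action repackaged: a product box neighborhood on which
the action stays inside a given open target set. -/
lemma key_box {G X : Type*} [Group G] [TopologicalSpace G] [TopologicalSpace X]
    (θ : TopPartialAction G X)
    (hcont : ContinuousOn (fun p : G × X => θ.map p.1 p.2) {p : G × X | p.2 ∈ θ.dom p.1⁻¹})
    {U : Set X} (hU : IsOpen U) {g₀ : G} {x : X} (hx : x ∈ θ.dom g₀⁻¹)
    (hUx : θ.map g₀ x ∈ U) :
    ∃ (V : Set G) (O : Set X), IsOpen V ∧ IsOpen O ∧ g₀ ∈ V ∧ x ∈ O ∧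
      ∀ g ∈ V, ∀ y ∈ O, y ∈ θ.dom g⁻¹ → θ.map g y ∈ U := by
  have h : ContinuousWithinAt (fun p : G × X => θ.map p.1 p.2)
      {p : G × X | p.2 ∈ θ.dom p.1⁻¹} (g₀, x) := hcont (g₀, x) hx
  have h2 : (fun p : G × X => θ.map p.1 p.2) ⁻¹' U ∈
      nhdsWithin (g₀, x) {p : G × X | p.2 ∈ θ.dom p.1⁻¹} := h (hU.mem_nhds hUx)
  rw [mem_nhdsWithin] at h2
  obtain ⟨t, ht_open, ht_mem, ht_sub⟩ := h2
  obtain ⟨V, O, hV, hO, hgV, hxO, hVO⟩ := isOpen_prod_iff.mp ht_open g₀ x ht_mem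
  refine ⟨V, O, hV, hO, hgV, hxO, fun g hg y hy hdom => ?_⟩
  have : ((g, y) : G × X) ∈ t ∩ {p : G × X | p.2 ∈ θ.dom p.1⁻¹} := ⟨hVO ⟨hg, hy⟩, hdom⟩
  exact ht_sub this

/-- Let `θ` be a topological partial action of a topological group `G` on a compact Hausdorff
space `X`.  If the map `θ : G∗X → X`, `(g,x) ↦ θ_g(x)`, is continuous on the domain
`G∗X = {(g,x) | x ∈ X_{g⁻¹}}` (with the subspace topology of `G × X`), then the induced map
`2^θ : G∗2^X → 2^X`, `(g,A) ↦ θ_g(A)`, is continuous on `G∗2^X = {(g,A) | A ⊆ X_{g⁻¹}}`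
(with the subspace topology of `G × 2^X`).  Since continuity on a set only depends on the
restriction of the map to that set, this is expressed for any total map `F` that agrees with
`(g,A) ↦ θ_g(A)` on `G∗2^X`. -/

theorem continuousOn_hyperspace_partialAction
    {G X : Type*} [Group G] [TopologicalSpace G] [IsTopologicalGroup G]
    [TopologicalSpace X] [CompactSpace X] [T2Space X]
    (θ : TopPartialAction G X)
    (hcont : ContinuousOn (fun p : G × X => θ.map p.1 p.2) {p : G × X | p.2 ∈ θ.dom p.1⁻¹})
    (F : G × NCompact X → NCompact X)
    (hF : ∀ p ∈ {p : G × NCompact X | p.2.carrier ⊆ θ.dom p.1⁻¹},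
      (F p).carrier = θ.map p.1 '' p.2.carrier) :
    ContinuousOn F {p : G × NCompact X | p.2.carrier ⊆ θ.dom p.1⁻¹} := by
  intro p hp
  obtain ⟨g₀, A₀⟩ := p
  have hp' : A₀.carrier ⊆ θ.dom g₀⁻¹ := hp
  show Filter.Tendsto F _ _
  apply TopologicalSpace.tendsto_nhds_generateFrom_iff.mpr
  rintro S ⟨U, hU, rfl | rfl⟩ hmem
  · -- S = {A | A.carrier ⊆ U}
    have himg : θ.map g₀ '' A₀.carrier ⊆ U := by
      rw [← hF (g₀, A₀) hp]; exact hmem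
    choose! V O hVopen hOopen hgV hxO hkey using fun x (hx : x ∈ A₀.carrier) =>
      key_box θ hcont hU (hp' hx) (himg ⟨x, hx, rfl⟩)
    obtain ⟨t, htA, htc⟩ := A₀.isCompact'.elim_nhds_subcover O
      (fun x hx => (hOopen x hx).mem_nhds (hxO x hx))
    refine mem_nhdsWithin.mpr ⟨(⋂ x ∈ t, V x) ×ˢ {A : NCompact X | A.carrier ⊆ ⋃ x ∈ t, O x},
      ?_, ?_, ?_⟩
    · refine IsOpen.prod (isOpen_biInter_finset fun x hx => hVopen x (htA x hx)) ?_
      exact TopologicalSpace.isOpen_generateFrom_of_mem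
        ⟨⋃ x ∈ t, O x, isOpen_biUnion fun x hx => hOopen x (htA x hx), Or.inl rfl⟩
    · exact ⟨Set.mem_iInter₂.mpr fun x hx => hgV x (htA x hx), htc⟩
    · rintro ⟨g, A⟩ ⟨⟨hgVs, hAO⟩, hAdom⟩
      show (F (g, A)).carrier ⊆ U
      rw [hF (g, A) hAdom]
      rintro _ ⟨a, ha, rfl⟩
      obtain ⟨x, hx, hax⟩ := Set.mem_iUnion₂.mp (hAO ha)
      exact hkey x (htA x hx) g (Set.mem_iInter₂.mp hgVs x hx) a hax (hAdom ha)
  · -- S = {A | (A.carrier ∩ U).Nonempty}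
    have himg : ((θ.map g₀ '' A₀.carrier) ∩ U).Nonempty := by
      rw [← hF (g₀, A₀) hp]; exact hmem
    obtain ⟨_, ⟨x, hx, rfl⟩, hxU⟩ := himg
    obtain ⟨V, O, hVopen, hOopen, hgV, hxO, hkey⟩ := key_box θ hcont hU (hp' hx) hxU
    refine mem_nhdsWithin.mpr ⟨V ×ˢ {A : NCompact X | (A.carrier ∩ O).Nonempty}, ?_, ?_, ?_⟩
    · exact hVopen.prod (TopologicalSpace.isOpen_generateFrom_of_mem ⟨O, hOopen, Or.inr rfl⟩)
    · exact ⟨hgV, x, hx, hxO⟩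
    · rintro ⟨g, A⟩ ⟨⟨hgVs, a, haA, haO⟩, hAdom⟩
      show ((F (g, A)).carrier ∩ U).Nonempty
      rw [hF (g, A) hAdom]
      exact ⟨θ.map g a, ⟨a, haA, rfl⟩, hkey g hgVs a haO (hAdom haA)⟩
end

section
/- Let θ = (θ_g, X_g)_{g∈G} be a topological partial action of a topological group G on a compact Hausdorff space X. If the domain G∗X = {(g,x) ∈ G × X : x ∈ X_{g⁻¹}} is closed in G × X, then the domain G∗2^X = {(g,A) ∈ G × 2^X : A ⊆ X_{g⁻¹}} of the induced partial action on the hyperspace 2^X is closed in G × 2^X. -/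
/-- Let `θ` be a topological partial action of a topological group `G` on a compact Hausdorff
space `X`.  If the domain `G∗X = {(g,x) | x ∈ X_{g⁻¹}}` of `θ` is closed in `G × X`, then
the domain `G∗2^X = {(g,A) | A ⊆ X_{g⁻¹}}` of the induced partial action `2^θ` on the
hyperspace `2^X` is closed in `G × 2^X`. -/
theorem isClosed_hyperspace_domain
    {G X : Type*} [Group G] [TopologicalSpace G] [IsTopologicalGroup G]
    [TopologicalSpace X] [CompactSpace X] [T2Space X]
    (θ : TopPartialAction G X)
    (hclosed : IsClosed {p : G × X | p.2 ∈ θ.dom p.1⁻¹}) :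
    IsClosed {p : G × NCompact X | p.2.carrier ⊆ θ.dom p.1⁻¹} := by
  rw [← isOpen_compl_iff] at hclosed ⊢
  rw [isOpen_prod_iff] at hclosed
  rw [isOpen_prod_iff]
  rintro g A hgA
  simp only [Set.mem_compl_iff, Set.mem_setOf_eq, Set.not_subset] at hgA
  obtain ⟨x, hxA, hx⟩ := hgA
  obtain ⟨V, U, hV, hU, hgV, hxU, hsub⟩ := hclosed g x hx
  refine ⟨V, {B : NCompact X | (B.carrier ∩ U).Nonempty}, hV, ?_, hgV,
    ⟨x, hxA, hxU⟩, ?_⟩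
  · exact TopologicalSpace.isOpen_generateFrom_of_mem ⟨U, hU, Or.inr rfl⟩
  · rintro ⟨g', B⟩ ⟨hg', ⟨y, hyB, hyU⟩⟩
    intro hB
    exact hsub (Set.mk_mem_prod hg' hyU) (hB hyB)
end

section
/- Let θ = (θ_g, X_g)_{g∈G} be a topological partial action of a topological group G on a compact Hausdorff space X, with enveloping space X_G = (G × X)/R, and let 2^θ be the induced partial action on the hyperspace 2^X, with enveloping space (2^X)_G = (G × 2^X)/2^R. Then the map Θ : X_G → (2^X)_G sending the class [g,x] to the class [g,{x}] is a well-defined topological embedding (a homeomorphism onto its image). -/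
variable {G X : Type*} [Group G] [TopologicalSpace G] [TopologicalSpace X]

/-- The equivalence relation `R` on `G × X` defining the enveloping space `X_G = (G × X)/R`:
`(g,x) R (h,y)` iff `x ∈ X_{g⁻¹h}` and `θ_{h⁻¹g}(x) = y`. -/
def envRel (θ : TopPartialAction G X) (p q : G × X) : Prop :=
  p.2 ∈ θ.dom (p.1⁻¹ * q.1) ∧ θ.map (q.1⁻¹ * p.1) p.2 = q.2

/-- The relation `2^R` on `G × 2^X` defining the enveloping space `(2^X)_G` of the induced
partial action `2^θ`: `(g,A) 2^R (h,B)` iff `A ⊆ X_{g⁻¹h}` and `θ_{h⁻¹g}(A) = B`. -/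
def envRelH (θ : TopPartialAction G X) (p q : G × NCompact X) : Prop :=
  p.2.carrier ⊆ θ.dom (p.1⁻¹ * q.1) ∧ θ.map (q.1⁻¹ * p.1) '' p.2.carrier = q.2.carrier

/-- The singleton map `X → 2^X`. -/
def sngl (x : X) : NCompact X := ⟨{x}, isCompact_singleton, Set.singleton_nonempty x⟩

lemma continuous_sngl : Continuous (sngl : X → NCompact X) := by
  apply continuous_generateFrom_iff.mpr
  rintro s ⟨U, hU, (rfl | rfl)⟩
  · convert hU using 1
    ext x; simp [sngl]
  · convert hU using 1
    ext x; simp [sngl]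

lemma envRelH_equivalence (θ : TopPartialAction G X) : Equivalence (envRelH θ) := by
  constructor
  · rintro ⟨g, A⟩
    refine ⟨?_, ?_⟩
    · simp [θ.dom_one]
    · show θ.map (g⁻¹ * g) '' A.carrier = A.carrier
      rw [inv_mul_cancel, Set.image_congr' θ.map_one, Set.image_id']
  · rintro ⟨g, A⟩ ⟨h, B⟩ ⟨hsub, himg⟩
    simp only [envRelH] at hsub himg ⊢
    have e : (h⁻¹ * g)⁻¹ = g⁻¹ * h := by group
    constructor
    · rw [← himg, ← θ.image_dom (h⁻¹ * g)]
      exact Set.image_mono (by rw [e]; exact hsub)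
    · rw [← himg, ← Set.image_comp]
      have key : ∀ x ∈ A.carrier, (θ.map (g⁻¹ * h) ∘ θ.map (h⁻¹ * g)) x = id x := by
        intro x hx
        have h1 := θ.map_inv (h⁻¹ * g) x (by rw [e]; exact hsub hx)
        rw [e] at h1
        exact h1
      rw [Set.image_congr key, Set.image_id]
  · rintro ⟨g, A⟩ ⟨h, B⟩ ⟨k, C⟩ ⟨hAB, hABimg⟩ ⟨hBC, hBCimg⟩
    simp only [envRelH] at hAB hABimg hBC hBCimg ⊢
    have e1 : (h⁻¹ * g)⁻¹ = g⁻¹ * h := by group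
    have key : ∀ x ∈ A.carrier, x ∈ θ.dom (g⁻¹ * k) ∧
        θ.map (k⁻¹ * g) x = (θ.map (k⁻¹ * h) ∘ θ.map (h⁻¹ * g)) x := by
      intro x hx
      have hx1 : x ∈ θ.dom (g⁻¹ * h) := hAB hx
      have hy : θ.map (h⁻¹ * g) x ∈ θ.dom (h⁻¹ * g) ∩ θ.dom (h⁻¹ * k) := by
        constructor
        · rw [← θ.image_dom (h⁻¹ * g)]
          exact ⟨x, by rw [e1]; exact hx1, rfl⟩
        · apply hBC
          rw [← hABimg]
          exact Set.mem_image_of_mem _ hx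
      have hxeq : θ.map (g⁻¹ * h) (θ.map (h⁻¹ * g) x) = x := by
        have h1 := θ.map_inv (h⁻¹ * g) x (by rw [e1]; exact hx1)
        rwa [e1] at h1
      have hxk : x ∈ θ.dom (g⁻¹ * h) ∩ θ.dom (g⁻¹ * k) := by
        have h2 := θ.image_inter (g⁻¹ * h) (h⁻¹ * k)
        have e2 : (g⁻¹ * h)⁻¹ = h⁻¹ * g := by group
        have e3 : g⁻¹ * h * (h⁻¹ * k) = g⁻¹ * k := by group
        rw [e2, e3] at h2
        rw [← h2]
        exact ⟨θ.map (h⁻¹ * g) x, hy, hxeq⟩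
      refine ⟨hxk.2, ?_⟩
      have h3 := θ.map_mul (k⁻¹ * h) (h⁻¹ * g) x (by
        constructor
        · rw [e1]; exact hx1
        · have e4 : (k⁻¹ * h * (h⁻¹ * g))⁻¹ = g⁻¹ * k := by group
          rw [e4]; exact hxk.2)
      have e5 : k⁻¹ * h * (h⁻¹ * g) = k⁻¹ * g := by group
      rw [e5] at h3
      exact h3.symm
    constructor
    · exact fun x hx => (key x hx).1
    · rw [← hBCimg, ← hABimg, ← Set.image_comp]
      exact Set.image_congr fun a ha => (key a ha).2

lemma isOpen_tube {W : Set (G × X)} (hW : IsOpen W) :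
    IsOpen {p : G × NCompact X | ∀ x ∈ p.2.carrier, (p.1, x) ∈ W} := by
  rw [isOpen_iff_forall_mem_open]
  rintro ⟨g, A⟩ hp
  have hsub : ({g} : Set G) ×ˢ A.carrier ⊆ W := by
    rintro ⟨a, x⟩ ⟨ha, hx⟩
    obtain rfl : a = g := ha
    exact hp x hx
  obtain ⟨u, v, hu, hv, hgu, hAv, huv⟩ :=
    generalized_tube_lemma isCompact_singleton A.isCompact' hW hsub
  refine ⟨u ×ˢ {B : NCompact X | B.carrier ⊆ v}, ?_, ?_, ?_⟩
  · rintro ⟨h, B⟩ ⟨hh, hB⟩ x hx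
    exact huv ⟨hh, hB hx⟩
  · exact hu.prod (TopologicalSpace.isOpen_generateFrom_of_mem ⟨v, hv, Or.inl rfl⟩)
  · exact ⟨hgu rfl, hAv⟩

/-- Let `θ` be a topological partial action of a topological group `G` on a compact Hausdorff
space `X`, with enveloping space `X_G = (G × X)/R`, and let `2^θ` be the induced partial
action on the hyperspace `2^X`, with enveloping space `(2^X)_G = (G × 2^X)/2^R` (both with
the quotient topology).  Then the map `Θ : X_G → (2^X)_G`, `[g,x] ↦ [g,{x}]`, is a
well-defined topological embedding. -/
theorem embedding_envelopingSpace_hyperspace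
    {G X : Type*} [Group G] [TopologicalSpace G] [IsTopologicalGroup G]
    [TopologicalSpace X] [CompactSpace X] [T2Space X]
    (θ : TopPartialAction G X) :
    ∃ Θ : Quot (envRel θ) → Quot (envRelH θ),
      (∀ (g : G) (x : X),
        Θ (Quot.mk (envRel θ) (g, x)) =
          Quot.mk (envRelH θ)
            (g, ⟨{x}, isCompact_singleton, Set.singleton_nonempty x⟩)) ∧
      Topology.IsEmbedding Θ := by
  have hwd : ∀ p q : G × X, envRel θ p q →
      Quot.mk (envRelH θ) (p.1, sngl p.2) = Quot.mk (envRelH θ) (q.1, sngl q.2) := by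
    rintro ⟨g, x⟩ ⟨h, y⟩ ⟨hd, hm⟩
    exact Quot.sound ⟨Set.singleton_subset_iff.mpr hd, by simp [sngl, hm]⟩
  set Θ : Quot (envRel θ) → Quot (envRelH θ) :=
    Quot.lift (fun p => Quot.mk (envRelH θ) (p.1, sngl p.2)) hwd with hΘdef
  have hequiv := envRelH_equivalence θ
  have hmkiff : ∀ p q : G × NCompact X,
      Quot.mk (envRelH θ) p = Quot.mk (envRelH θ) q ↔ envRelH θ p q :=
    fun p q => Quot.eq.trans hequiv.eqvGen_iff
  have hcont : Continuous Θ :=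
    continuous_quot_lift _
      (continuous_quot_mk.comp (continuous_fst.prodMk (continuous_sngl.comp continuous_snd)))
  refine ⟨Θ, fun g x => rfl, ⟨?_⟩, ?_⟩
  · -- eq_induced
    refine le_antisymm (continuous_iff_le_induced.mp hcont) ?_
    rw [TopologicalSpace.le_def]
    intro U hU
    have hWopen : IsOpen (Quot.mk (envRel θ) ⁻¹' U) := hU
    set W : Set (G × X) := Quot.mk (envRel θ) ⁻¹' U with hWdef
    set W' : Set (G × NCompact X) := {p | ∀ x ∈ p.2.carrier, (p.1, x) ∈ W} with hW'def
    have hW'open : IsOpen W' := isOpen_tube hWopen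
    have hWsat : ∀ p q : G × X, envRel θ p q → p ∈ W → q ∈ W := by
      intro p q hpq hp
      have h1 : Quot.mk (envRel θ) p = Quot.mk (envRel θ) q := Quot.sound hpq
      show Quot.mk (envRel θ) q ∈ U
      rw [← h1]
      exact hp
    have hW'sat : ∀ p q : G × NCompact X, envRelH θ p q → p ∈ W' → q ∈ W' := by
      rintro ⟨g, A⟩ ⟨h, B⟩ ⟨hd, hm⟩ hp y hy
      simp only at hy hm
      rw [← hm] at hy
      obtain ⟨x, hx, rfl⟩ := hy
      exact hWsat (g, x) (h, θ.map (h⁻¹ * g) x) ⟨hd hx, rfl⟩ (hp x hx)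
    have hpreim : Quot.mk (envRelH θ) ⁻¹' (Quot.mk (envRelH θ) '' W') = W' := by
      ext p
      simp only [Set.mem_preimage, Set.mem_image]
      constructor
      · rintro ⟨q, hq, heq⟩
        exact hW'sat q p ((hmkiff q p).mp heq) hq
      · exact fun hp => ⟨p, hp, rfl⟩
    refine isOpen_induced_iff.mpr ⟨Quot.mk (envRelH θ) '' W', ?_, ?_⟩
    · rw [isOpen_coinduced, hpreim]
      exact hW'open
    · ext c
      induction c using Quot.ind with | _ p => ?_
      obtain ⟨g, x⟩ := p
      simp only [Set.mem_preimage]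
      show Quot.mk (envRelH θ) (g, sngl x) ∈ Quot.mk (envRelH θ) '' W' ↔ _
      constructor
      · rintro ⟨q, hq, heq⟩
        have hmem : (g, sngl x) ∈ W' := hW'sat q (g, sngl x) ((hmkiff q _).mp heq) hq
        exact hmem x rfl
      · intro hc
        refine ⟨(g, sngl x), ?_, rfl⟩
        rintro y (rfl : y = x)
        exact hc
  · -- injective
    intro a b hab
    induction a using Quot.ind with | _ p => ?_
    induction b using Quot.ind with | _ q => ?_
    obtain ⟨g, x⟩ := p
    obtain ⟨h, y⟩ := q
    have hrel : envRelH θ (g, sngl x) (h, sngl y) := (hmkiff _ _).mp hab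
    apply Quot.sound
    refine ⟨Set.singleton_subset_iff.mp hrel.1, ?_⟩
    have h2 := hrel.2
    simpa [sngl, Set.image_singleton] using h2
end

section
/- Let θ = (θ_g, X_g)_{g∈G} be a topological partial action of a topological group G on a compact Hausdorff space X, let R be the equivalence relation on G × X given by (g,x) R (h,y) iff x ∈ X_{g⁻¹h} and θ_{h⁻¹g}(x) = y, and let 2^R be the equivalence relation on G × 2^X given by (g,A) 2^R (h,B) iff A ⊆ X_{g⁻¹h} and θ_{h⁻¹g}(A) = B. If R is closed as a subset of (G × X) × (G × X), then 2^R is closed as a subset of (G × 2^X) × (G × 2^X). -/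
variable {G X : Type*} [Group G] [TopologicalSpace G] [TopologicalSpace X]

open TopologicalSpace in
lemma NCompact.isOpen_subsets {X : Type*} [TopologicalSpace X] {U : Set X} (hU : IsOpen U) :
    IsOpen {A : NCompact X | A.carrier ⊆ U} :=
  isOpen_generateFrom_of_mem ⟨U, hU, Or.inl rfl⟩

open TopologicalSpace in
lemma NCompact.isOpen_hits {X : Type*} [TopologicalSpace X] {U : Set X} (hU : IsOpen U) :
    IsOpen {A : NCompact X | (A.carrier ∩ U).Nonempty} :=
  isOpen_generateFrom_of_mem ⟨U, hU, Or.inr rfl⟩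

/-- The Vietoris lift of a closed relation on `G × X` is closed. -/
lemma isClosed_vietoris_lift {G X : Type*} [TopologicalSpace G] [TopologicalSpace X]
    {F : Set ((G × X) × (G × X))} (hF : IsClosed F) :
    IsClosed {pq : (G × NCompact X) × (G × NCompact X) |
      (∀ a ∈ pq.1.2.carrier, ∃ b ∈ pq.2.2.carrier, ((pq.1.1, a), (pq.2.1, b)) ∈ F) ∧
      (∀ b ∈ pq.2.2.carrier, ∃ a ∈ pq.1.2.carrier, ((pq.1.1, a), (pq.2.1, b)) ∈ F)} := by
  rw [← isOpen_compl_iff]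
  rw [isOpen_iff_forall_mem_open]
  rintro ⟨⟨g, A⟩, ⟨h, B⟩⟩ hmem
  simp only [Set.mem_compl_iff, Set.mem_setOf_eq, not_and_or] at hmem
  rcases hmem with hP | hQ
  · push_neg at hP
    obtain ⟨a, ha, hab⟩ := hP
    have hsub : ({(g, a)} : Set (G × X)) ×ˢ (({h} : Set G) ×ˢ B.carrier) ⊆ Fᶜ := by
      rintro ⟨p, q⟩ ⟨hp, hq1, hq2⟩
      simp only [Set.mem_singleton_iff] at hp hq1
      subst hp
      have : ((g, a), (q.1, q.2)) ∉ F := by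
        have := hab q.2 hq2
        rw [hq1]; exact this
      simpa using this
    obtain ⟨u, v, hu, hv, hu1, hv1, huv⟩ :=
      generalized_tube_lemma isCompact_singleton
        (isCompact_singleton.prod B.isCompact') hF.isOpen_compl hsub
    obtain ⟨u1, u2, hu1o, hu2o, hg, hax, hu12⟩ :=
      isOpen_prod_iff.mp hu g a (hu1 rfl)
    have hv' : ({h} : Set G) ×ˢ B.carrier ⊆ v := hv1
    obtain ⟨w1, w2, hw1o, hw2o, hh1, hB2, hw12⟩ :=
      generalized_tube_lemma isCompact_singleton B.isCompact' hv hv'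
    refine ⟨(u1 ×ˢ {A' : NCompact X | (A'.carrier ∩ u2).Nonempty}) ×ˢ
        (w1 ×ˢ {B' : NCompact X | B'.carrier ⊆ w2}), ?_, ?_, ?_⟩
    · rintro ⟨⟨g', A'⟩, ⟨h', B'⟩⟩ ⟨⟨hg', hA'⟩, hh', hB'⟩
      simp only [Set.mem_compl_iff, Set.mem_setOf_eq, not_and_or]
      left
      push_neg
      obtain ⟨a', ha'A, ha'u⟩ := hA'
      refine ⟨a', ha'A, fun b' hb' => ?_⟩
      have h1 : (g', a') ∈ u := hu12 ⟨hg', ha'u⟩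
      have h2 : (h', b') ∈ v := hw12 ⟨hh', hB' hb'⟩
      exact huv ⟨h1, h2⟩
    · exact ((hu1o.prod (NCompact.isOpen_hits hu2o)).prod
        (hw1o.prod (NCompact.isOpen_subsets hw2o)))
    · exact ⟨⟨hg, a, ha, hax⟩, hh1 rfl, hB2⟩
  · push_neg at hQ
    obtain ⟨b, hb, hba⟩ := hQ
    have hsub : (({g} : Set G) ×ˢ A.carrier) ×ˢ ({(h, b)} : Set (G × X)) ⊆ Fᶜ := by
      rintro ⟨p, q⟩ ⟨⟨hp1, hp2⟩, hq⟩
      simp only [Set.mem_singleton_iff] at hp1 hq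
      subst hq
      have : ((p.1, p.2), (h, b)) ∉ F := by rw [hp1]; exact hba p.2 hp2
      simpa using this
    obtain ⟨u, v, hu, hv, hu1, hv1, huv⟩ :=
      generalized_tube_lemma (isCompact_singleton.prod A.isCompact')
        isCompact_singleton hF.isOpen_compl hsub
    obtain ⟨u1, u2, hu1o, hu2o, hg, hAx, hu12⟩ :=
      generalized_tube_lemma isCompact_singleton A.isCompact' hu hu1
    obtain ⟨w1, w2, hw1o, hw2o, hh1, hbx, hw12⟩ :=
      isOpen_prod_iff.mp hv h b (hv1 rfl)
    refine ⟨(u1 ×ˢ {A' : NCompact X | A'.carrier ⊆ u2}) ×ˢ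
        (w1 ×ˢ {B' : NCompact X | (B'.carrier ∩ w2).Nonempty}), ?_, ?_, ?_⟩
    · rintro ⟨⟨g', A'⟩, ⟨h', B'⟩⟩ ⟨⟨hg', hA'⟩, hh', hB'⟩
      simp only [Set.mem_compl_iff, Set.mem_setOf_eq, not_and_or]
      right
      push_neg
      obtain ⟨b', hb'B, hb'u⟩ := hB'
      refine ⟨b', hb'B, fun a' ha' => ?_⟩
      have h1 : (g', a') ∈ u := hu12 ⟨hg', hA' ha'⟩
      have h2 : (h', b') ∈ v := hw12 ⟨hh', hb'u⟩
      exact huv ⟨h1, h2⟩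
    · exact ((hu1o.prod (NCompact.isOpen_subsets hu2o)).prod
        (hw1o.prod (NCompact.isOpen_hits hw2o)))
    · exact ⟨⟨hg rfl, hAx⟩, hh1, b, hb, hbx⟩

/-- Let `θ` be a topological partial action of a topological group `G` on a compact Hausdorff
space `X`.  If the relation `R` (defining the enveloping space `X_G`) is closed as a subset
of `(G × X) × (G × X)`, then the relation `2^R` (defining the enveloping space `(2^X)_G` of
the induced partial action on the hyperspace `2^X`) is closed as a subset of
`(G × 2^X) × (G × 2^X)`. -/
theorem isClosed_hyperspace_envRel
    {G X : Type*} [Group G] [TopologicalSpace G] [IsTopologicalGroup G]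
    [TopologicalSpace X] [CompactSpace X] [T2Space X]
    (θ : TopPartialAction G X)
    (hR : IsClosed {pq : (G × X) × (G × X) | envRel θ pq.1 pq.2}) :
    IsClosed {pq : (G × NCompact X) × (G × NCompact X) | envRelH θ pq.1 pq.2} := by
  have key : {pq : (G × NCompact X) × (G × NCompact X) | envRelH θ pq.1 pq.2} =
      {pq : (G × NCompact X) × (G × NCompact X) |
        (∀ a ∈ pq.1.2.carrier, ∃ b ∈ pq.2.2.carrier,
          ((pq.1.1, a), (pq.2.1, b)) ∈ {pq : (G × X) × (G × X) | envRel θ pq.1 pq.2}) ∧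
        (∀ b ∈ pq.2.2.carrier, ∃ a ∈ pq.1.2.carrier,
          ((pq.1.1, a), (pq.2.1, b)) ∈ {pq : (G × X) × (G × X) | envRel θ pq.1 pq.2})} := by
    ext ⟨⟨g, A⟩, ⟨h, B⟩⟩
    simp only [Set.mem_setOf_eq, envRelH, envRel]
    constructor
    · rintro ⟨hsub, him⟩
      refine ⟨fun a ha => ⟨θ.map (h⁻¹ * g) a, ?_, hsub ha, rfl⟩, fun b hb => ?_⟩
      · rw [← him]; exact ⟨a, ha, rfl⟩
      · rw [← him] at hb
        obtain ⟨a, ha, hab⟩ := hb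
        exact ⟨a, ha, hsub ha, hab⟩
    · rintro ⟨h1, h2⟩
      refine ⟨fun a ha => (h1 a ha).choose_spec.2.1, ?_⟩
      apply Set.Subset.antisymm
      · rintro _ ⟨a, ha, rfl⟩
        obtain ⟨b, hbB, _, heq⟩ := h1 a ha
        show θ.map (h⁻¹ * g) a ∈ B.carrier
        rw [heq]; exact hbB
      · rintro b hb
        obtain ⟨a, ha, _, heq⟩ := h2 b hb
        exact ⟨a, ha, heq⟩
  rw [key]
  exact isClosed_vietoris_lift hR
end

section
/- Let θ = (θ_g, X_g)_{g∈G} be a topological partial action of a topological group G on a compact Hausdorff space X, with enveloping space X_G = (G × X)/R, and let 2^θ be the induced partial action on the hyperspace 2^X, with enveloping space (2^X)_G = (G × 2^X)/2^R. Then X_G is Hausdorff if and only if (2^X)_G is Hausdorff. -/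
variable {G X : Type*} [Group G] [TopologicalSpace G] [TopologicalSpace X]

section Aux

open TopologicalSpace Set

lemma NCompact.ext' {Y : Type*} [TopologicalSpace Y] {A B : NCompact Y}
    (h : A.carrier = B.carrier) : A = B := by
  cases A; cases B; simpa using h

lemma isOpen_sub {U : Set X} (hU : IsOpen U) :
    IsOpen {A : NCompact X | A.carrier ⊆ U} :=
  TopologicalSpace.isOpen_generateFrom_of_mem ⟨U, hU, Or.inl rfl⟩

lemma isOpen_hit {U : Set X} (hU : IsOpen U) :
    IsOpen {A : NCompact X | (A.carrier ∩ U).Nonempty} :=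
  TopologicalSpace.isOpen_generateFrom_of_mem ⟨U, hU, Or.inr rfl⟩

/-- The singleton embedding `X → 2^X`. -/
def singNC (x : X) : NCompact X := ⟨{x}, isCompact_singleton, ⟨x, rfl⟩⟩

lemma continuous_singNC : Continuous (singNC : X → NCompact X) := by
  rw [NCompact.instTopologicalSpace, continuous_generateFrom_iff]
  rintro S ⟨U, hU, rfl | rfl⟩
  · convert hU using 1
    ext x; simp [singNC, Set.singleton_subset_iff]
  · convert hU using 1
    ext x; simp [singNC]

/-- Image of a nonempty compact set under a map, with a junk fallback when
the image is not compact. -/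
noncomputable def imgNC (f : X → X) (A : NCompact X) : NCompact X :=
  open Classical in
  if h : IsCompact (f '' A.carrier) then ⟨f '' A.carrier, h, A.nonempty'.image f⟩ else A

lemma imgNC_carrier {f : X → X} {A : NCompact X} (h : IsCompact (f '' A.carrier)) :
    (imgNC f A).carrier = f '' A.carrier := by
  unfold imgNC
  rw [dif_pos h]

lemma continuousOn_imgNC {f : X → X} {D : Set X} (hD : IsOpen D) (hf : ContinuousOn f D) :
    ContinuousOn (imgNC f) {A : NCompact X | A.carrier ⊆ D} := by
  rw [continuousOn_open_iff (isOpen_sub hD)]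
  intro t ht
  have ht' : TopologicalSpace.GenerateOpen
      {S | ∃ U : Set X, IsOpen U ∧
        (S = {A : NCompact X | A.carrier ⊆ U} ∨
          S = {A : NCompact X | (A.carrier ∩ U).Nonempty})} t := ht
  clear ht
  induction ht' with
  | @basic S hS =>
    obtain ⟨U, hU, rfl | rfl⟩ := hS
    · have : {A : NCompact X | A.carrier ⊆ D} ∩ imgNC f ⁻¹' {A | A.carrier ⊆ U}
          = {A : NCompact X | A.carrier ⊆ D ∩ f ⁻¹' U} ∩ {A | A.carrier ⊆ D} := by
        ext A
        simp only [Set.mem_inter_iff, Set.mem_setOf_eq, Set.mem_preimage]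
        constructor
        · rintro ⟨hAD, him⟩
          have hc : IsCompact (f '' A.carrier) :=
            A.isCompact'.image_of_continuousOn (hf.mono hAD)
          rw [imgNC_carrier hc] at him
          exact ⟨fun a ha => ⟨hAD ha, him ⟨a, ha, rfl⟩⟩, hAD⟩
        · rintro ⟨h1, hAD⟩
          have hc : IsCompact (f '' A.carrier) :=
            A.isCompact'.image_of_continuousOn (hf.mono hAD)
          refine ⟨hAD, ?_⟩
          show (imgNC f A).carrier ⊆ U
          rw [imgNC_carrier hc]
          rintro y ⟨a, ha, rfl⟩
          exact (h1 ha).2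
      rw [this]
      exact (isOpen_sub (hf.isOpen_inter_preimage hD hU)).inter (isOpen_sub hD)
    · have : {A : NCompact X | A.carrier ⊆ D} ∩ imgNC f ⁻¹' {A | (A.carrier ∩ U).Nonempty}
          = {A : NCompact X | (A.carrier ∩ (D ∩ f ⁻¹' U)).Nonempty}
            ∩ {A | A.carrier ⊆ D} := by
        ext A
        simp only [Set.mem_inter_iff, Set.mem_setOf_eq, Set.mem_preimage]
        constructor
        · rintro ⟨hAD, him⟩
          have hc : IsCompact (f '' A.carrier) :=
            A.isCompact'.image_of_continuousOn (hf.mono hAD)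
          rw [imgNC_carrier hc] at him
          obtain ⟨y, ⟨a, ha, rfl⟩, hy⟩ := him
          exact ⟨⟨a, ha, hAD ha, hy⟩, hAD⟩
        · rintro ⟨⟨a, ha, _, hfa⟩, hAD⟩
          have hc : IsCompact (f '' A.carrier) :=
            A.isCompact'.image_of_continuousOn (hf.mono hAD)
          refine ⟨hAD, ?_⟩
          show ((imgNC f A).carrier ∩ U).Nonempty
          rw [imgNC_carrier hc]
          exact ⟨f a, ⟨a, ha, rfl⟩, hfa⟩
      rw [this]
      exact (isOpen_hit (hf.isOpen_inter_preimage hD hU)).inter (isOpen_sub hD)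
  | univ => simpa using isOpen_sub hD
  | inter t₁ t₂ _ _ ih₁ ih₂ =>
    have : {A : NCompact X | A.carrier ⊆ D} ∩ imgNC f ⁻¹' (t₁ ∩ t₂)
        = ({A : NCompact X | A.carrier ⊆ D} ∩ imgNC f ⁻¹' t₁)
          ∩ ({A : NCompact X | A.carrier ⊆ D} ∩ imgNC f ⁻¹' t₂) := by
      ext A; simp only [Set.mem_inter_iff, Set.mem_preimage, Set.mem_setOf_eq]; tauto
    rw [this]; exact ih₁.inter ih₂
  | sUnion T _ ih =>
    have : {A : NCompact X | A.carrier ⊆ D} ∩ imgNC f ⁻¹' ⋃₀ T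
        = ⋃ t ∈ T, {A : NCompact X | A.carrier ⊆ D} ∩ imgNC f ⁻¹' t := by
      ext A; simp only [Set.mem_inter_iff, Set.mem_preimage, Set.mem_sUnion, Set.mem_iUnion,
        Set.mem_setOf_eq, exists_prop]; tauto
    rw [this]
    exact isOpen_biUnion fun t htT => ih t htT

/-- Hausdorffness of `Quot r` for an equivalence relation with open saturations. -/
lemma t2_quot_iff {Y : Type*} [TopologicalSpace Y] {r : Y → Y → Prop} (hr : Equivalence r)
    (hsat : ∀ U : Set Y, IsOpen U → IsOpen {q | ∃ p ∈ U, r p q}) :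
    T2Space (Quot r) ↔ IsClosed {pq : Y × Y | r pq.1 pq.2} := by
  have hmk : ∀ p q : Y, Quot.mk r p = Quot.mk r q ↔ r p q := by
    intro p q; rw [Quot.eq, hr.eqvGen_iff]
  have hopen : IsOpenMap (Quot.mk r) := by
    intro U hU
    rw [← isQuotientMap_quot_mk.isOpen_preimage]
    have : Quot.mk r ⁻¹' (Quot.mk r '' U) = {q | ∃ p ∈ U, r p q} := by
      ext q
      simp only [Set.mem_preimage, Set.mem_image, Set.mem_setOf_eq]
      constructor
      · rintro ⟨p, hp, hpq⟩; exact ⟨p, hp, (hmk p q).1 hpq⟩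
      · rintro ⟨p, hp, hpq⟩; exact ⟨p, hp, (hmk p q).2 hpq⟩
    rw [this]; exact hsat U hU
  constructor
  · intro h
    have : {pq : Y × Y | r pq.1 pq.2}
        = (fun pq : Y × Y => (Quot.mk r pq.1, Quot.mk r pq.2)) ⁻¹' Set.diagonal (Quot r) := by
      ext ⟨p, q⟩
      simp only [Set.mem_preimage, Set.mem_setOf_eq, Set.mem_diagonal_iff]
      exact ((hmk p q).symm)
    rw [this]
    exact isClosed_diagonal.preimage
      ((continuous_quot_mk.comp continuous_fst).prodMk (continuous_quot_mk.comp continuous_snd))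
  · intro h
    refine ⟨fun a b hab => ?_⟩
    obtain ⟨p, rfl⟩ := Quot.exists_rep a
    obtain ⟨q, rfl⟩ := Quot.exists_rep b
    have hpq : ¬ r p q := fun hrr => hab ((hmk p q).2 hrr)
    have : (p, q) ∈ {pq : Y × Y | r pq.1 pq.2}ᶜ := hpq
    obtain ⟨u, v, hu, hv, hpu, hqv, huv⟩ := isOpen_prod_iff.1 h.isOpen_compl p q this
    refine ⟨Quot.mk r '' u, Quot.mk r '' v, hopen u hu, hopen v hv,
      ⟨p, hpu, rfl⟩, ⟨q, hqv, rfl⟩, ?_⟩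
    rw [Set.disjoint_left]
    rintro c ⟨p', hp', rfl⟩ ⟨q', hq', hq'c⟩
    exact (huv (Set.mk_mem_prod hp' hq') (hr.symm ((hmk q' p').1 hq'c)))
end Aux

section Theta

set_option linter.unusedSectionVars false

open Set

variable {G X : Type*} [Group G] [TopologicalSpace G] [IsTopologicalGroup G] [TopologicalSpace X]
variable (θ : TopPartialAction G X)

lemma TPA.image_subset_dom {k : G} {A : Set X} (hA : A ⊆ θ.dom k⁻¹) :
    θ.map k '' A ⊆ θ.dom k := by
  rw [← θ.image_dom k]; exact Set.image_mono hA

lemma TPA.image_image {k : G} {A : Set X} (hA : A ⊆ θ.dom k⁻¹) :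
    θ.map k⁻¹ '' (θ.map k '' A) = A := by
  rw [← Set.image_comp]
  have : ∀ a ∈ A, (θ.map k⁻¹ ∘ θ.map k) a = id a := fun a ha => θ.map_inv k a (hA ha)
  rw [Set.image_congr this, Set.image_id]

lemma TPA.image_image' {k : G} {A : Set X} (hA : A ⊆ θ.dom k) :
    θ.map k '' (θ.map k⁻¹ '' A) = A := by
  have := TPA.image_image θ (k := k⁻¹) (A := A) (by rwa [inv_inv])
  rwa [inv_inv] at this

lemma envRelH_equiv : Equivalence (envRelH θ) := by
  constructor
  · rintro ⟨g, A⟩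
    refine ⟨?_, ?_⟩
    · show A.carrier ⊆ θ.dom (g⁻¹ * g)
      rw [inv_mul_cancel, θ.dom_one]; exact Set.subset_univ _
    · show θ.map (g⁻¹ * g) '' A.carrier = A.carrier
      rw [inv_mul_cancel]
      have : ∀ a ∈ A.carrier, θ.map 1 a = id a := fun a _ => θ.map_one a
      rw [Set.image_congr this, Set.image_id]
  · rintro ⟨g, A⟩ ⟨h, B⟩ ⟨h1', h2'⟩
    have h1 : A.carrier ⊆ θ.dom (g⁻¹ * h) := h1'
    have h2 : θ.map (h⁻¹ * g) '' A.carrier = B.carrier := h2'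
    have hk : (h⁻¹ * g)⁻¹ = g⁻¹ * h := by simp [mul_inv_rev]
    refine ⟨?_, ?_⟩
    · show B.carrier ⊆ θ.dom (h⁻¹ * g)
      rw [← h2]; exact TPA.image_subset_dom θ (by rwa [hk])
    · show θ.map (g⁻¹ * h) '' B.carrier = A.carrier
      rw [← h2, ← hk]
      exact TPA.image_image θ (by rwa [hk])
  · rintro ⟨g, A⟩ ⟨h, B⟩ ⟨l, C⟩ ⟨h1', h2'⟩ ⟨h3', h4'⟩
    have h1 : A.carrier ⊆ θ.dom (g⁻¹ * h) := h1'
    have h2 : θ.map (h⁻¹ * g) '' A.carrier = B.carrier := h2'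
    have h3 : B.carrier ⊆ θ.dom (h⁻¹ * l) := h3'
    have h4 : θ.map (l⁻¹ * h) '' B.carrier = C.carrier := h4'
    have e1 : (h⁻¹ * g)⁻¹ = g⁻¹ * h := by simp [mul_inv_rev]
    have e1' : (g⁻¹ * h)⁻¹ = h⁻¹ * g := by simp [mul_inv_rev]
    have e2 : g⁻¹ * h * (h⁻¹ * l) = g⁻¹ * l := by simp [mul_assoc]
    have e3 : l⁻¹ * h * (h⁻¹ * g) = l⁻¹ * g := by simp [mul_assoc]
    have hBg : B.carrier ⊆ θ.dom (h⁻¹ * g) := by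
      rw [← h2]; exact TPA.image_subset_dom θ (by rwa [e1])
    have key : A.carrier ⊆ θ.dom (g⁻¹ * h) ∩ θ.dom (g⁻¹ * l) := by
      intro a ha
      have hbB : θ.map (h⁻¹ * g) a ∈ B.carrier := h2 ▸ ⟨a, ha, rfl⟩
      have haeq : θ.map (g⁻¹ * h) (θ.map (h⁻¹ * g) a) = a := by
        rw [← e1]; exact θ.map_inv (h⁻¹ * g) a (by rw [e1]; exact h1 ha)
      have hd1 : θ.map (h⁻¹ * g) a ∈ θ.dom (g⁻¹ * h)⁻¹ := by
        rw [e1']; exact hBg hbB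
      have hmem : a ∈ θ.map (g⁻¹ * h) '' (θ.dom (g⁻¹ * h)⁻¹ ∩ θ.dom (h⁻¹ * l)) :=
        ⟨_, ⟨hd1, h3 hbB⟩, haeq⟩
      rw [θ.image_inter, e2] at hmem
      exact hmem
    refine ⟨?_, ?_⟩
    · exact key.trans Set.inter_subset_right
    · show θ.map (l⁻¹ * g) '' A.carrier = C.carrier
      rw [← h4, ← h2, ← Set.image_comp]
      refine (Set.image_congr ?_).symm
      intro a ha
      have hmem2 : a ∈ θ.dom (h⁻¹ * g)⁻¹ ∩ θ.dom ((l⁻¹ * h) * (h⁻¹ * g))⁻¹ := by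
        constructor
        · rw [e1]; exact (key ha).1
        · rw [e3]
          have : (l⁻¹ * g)⁻¹ = g⁻¹ * l := by simp [mul_inv_rev]
          rw [this]; exact (key ha).2
      have hm := θ.map_mul (l⁻¹ * h) (h⁻¹ * g) a hmem2
      rw [e3] at hm
      simpa using hm

lemma envRel_iff_singNC (p q : G × X) :
    envRel θ p q ↔ envRelH θ (p.1, singNC p.2) (q.1, singNC q.2) := by
  simp only [envRel, envRelH, singNC, Set.singleton_subset_iff, Set.image_singleton,
    Set.singleton_eq_singleton_iff]

lemma envRel_equiv : Equivalence (envRel θ) := by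
  constructor
  · intro p
    exact (envRel_iff_singNC θ p p).2 ((envRelH_equiv θ).refl _)
  · intro p q h
    exact (envRel_iff_singNC θ q p).2 ((envRelH_equiv θ).symm ((envRel_iff_singNC θ p q).1 h))
  · intro p q r h1 h2
    exact (envRel_iff_singNC θ p r).2 ((envRelH_equiv θ).trans
      ((envRel_iff_singNC θ p q).1 h1) ((envRel_iff_singNC θ q r).1 h2))

lemma satOpen : ∀ U : Set (G × X), IsOpen U → IsOpen {q | ∃ p ∈ U, envRel θ p q} := by
  intro U hU
  rw [isOpen_iff_forall_mem_open]
  rintro ⟨h, y⟩ ⟨⟨g, x⟩, hpU, hx, hmap⟩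
  simp only at hx hmap
  set k := h⁻¹ * g with hkdef
  have hkinv : k⁻¹ = g⁻¹ * h := by simp [hkdef, mul_inv_rev]
  have hx' : x ∈ θ.dom k⁻¹ := by rwa [hkinv]
  have hcont : ContinuousOn (fun q : G × X => (q.1 * k, θ.map k⁻¹ q.2))
      (Set.univ ×ˢ θ.dom k) := by
    refine ContinuousOn.prodMk ((continuous_fst.mul continuous_const).continuousOn) ?_
    have hc := θ.continuousOn_map k⁻¹
    rw [inv_inv] at hc
    exact hc.comp continuous_snd.continuousOn (fun q hq => hq.2)
  refine ⟨(Set.univ ×ˢ θ.dom k) ∩ (fun q : G × X => (q.1 * k, θ.map k⁻¹ q.2)) ⁻¹' U,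
    ?_, hcont.isOpen_inter_preimage (isOpen_univ.prod (θ.isOpen_dom k)) hU, ?_⟩
  · rintro ⟨h', y'⟩ ⟨⟨-, hy'⟩, hpre⟩
    refine ⟨(h' * k, θ.map k⁻¹ y'), hpre, ?_, ?_⟩
    · show θ.map k⁻¹ y' ∈ θ.dom ((h' * k)⁻¹ * h')
      have : (h' * k)⁻¹ * h' = k⁻¹ := by simp [mul_inv_rev, mul_assoc]
      rw [this, ← θ.image_dom k⁻¹]
      exact ⟨y', by rwa [inv_inv], rfl⟩
    · show θ.map (h'⁻¹ * (h' * k)) (θ.map k⁻¹ y') = y'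
      have : h'⁻¹ * (h' * k) = k := by simp [mul_assoc]
      rw [this]
      have := θ.map_inv k⁻¹ y' (by rwa [inv_inv])
      rwa [inv_inv] at this
  · have hy : y ∈ θ.dom k := by rw [← θ.image_dom k]; exact ⟨x, hx', hmap⟩
    have h1 : h * k = g := by simp [hkdef, mul_assoc]
    have h2 : θ.map k⁻¹ y = x := by rw [← hmap]; exact θ.map_inv k x hx'
    have hU' : (h * k, θ.map k⁻¹ y) ∈ U := by rw [h1, h2]; exact hpU
    exact ⟨⟨Set.mem_univ _, hy⟩, hU'⟩

lemma satOpenH : ∀ U : Set (G × NCompact X), IsOpen U →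
    IsOpen {q | ∃ p ∈ U, envRelH θ p q} := by
  intro U hU
  rw [isOpen_iff_forall_mem_open]
  rintro ⟨h, B⟩ ⟨⟨g, A⟩, hpU, hA', hmap'⟩
  have hA : A.carrier ⊆ θ.dom (g⁻¹ * h) := hA'
  have hmap : θ.map (h⁻¹ * g) '' A.carrier = B.carrier := hmap'
  clear hA' hmap'
  set k := h⁻¹ * g with hkdef
  have hkinv : k⁻¹ = g⁻¹ * h := by simp [hkdef, mul_inv_rev]
  have hAd : A.carrier ⊆ θ.dom k⁻¹ := by rwa [hkinv]
  have hcontk : ContinuousOn (θ.map k⁻¹) (θ.dom k) := by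
    have hc := θ.continuousOn_map k⁻¹; rwa [inv_inv] at hc
  have hcont : ContinuousOn (fun q : G × NCompact X => (q.1 * k, imgNC (θ.map k⁻¹) q.2))
      (Set.univ ×ˢ {B' : NCompact X | B'.carrier ⊆ θ.dom k}) := by
    refine ContinuousOn.prodMk ((continuous_fst.mul continuous_const).continuousOn) ?_
    exact (continuousOn_imgNC (θ.isOpen_dom k) hcontk).comp
      continuous_snd.continuousOn (fun q hq => hq.2)
  refine ⟨(Set.univ ×ˢ {B' : NCompact X | B'.carrier ⊆ θ.dom k}) ∩
      (fun q : G × NCompact X => (q.1 * k, imgNC (θ.map k⁻¹) q.2)) ⁻¹' U,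
    ?_, hcont.isOpen_inter_preimage
      (isOpen_univ.prod (isOpen_sub (θ.isOpen_dom k))) hU, ?_⟩
  · rintro ⟨h', B'⟩ ⟨⟨-, hB'⟩, hpre⟩
    have hc : IsCompact (θ.map k⁻¹ '' B'.carrier) :=
      B'.isCompact'.image_of_continuousOn (hcontk.mono hB')
    refine ⟨(h' * k, imgNC (θ.map k⁻¹) B'), hpre, ?_, ?_⟩
    · show (imgNC (θ.map k⁻¹) B').carrier ⊆ θ.dom ((h' * k)⁻¹ * h')
      have e : (h' * k)⁻¹ * h' = k⁻¹ := by simp [mul_inv_rev, mul_assoc]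
      rw [e, imgNC_carrier hc]
      exact TPA.image_subset_dom θ (k := k⁻¹) (by rwa [inv_inv])
    · show θ.map (h'⁻¹ * (h' * k)) '' (imgNC (θ.map k⁻¹) B').carrier = B'.carrier
      have e : h'⁻¹ * (h' * k) = k := by simp [mul_assoc]
      rw [e, imgNC_carrier hc]
      exact TPA.image_image' θ hB'
  · have hBsub : B.carrier ⊆ θ.dom k := by
      rw [← hmap]; exact TPA.image_subset_dom θ hAd
    have h1 : h * k = g := by simp [hkdef, mul_assoc]
    have h2 : imgNC (θ.map k⁻¹) B = A := by
      have hcarr : θ.map k⁻¹ '' B.carrier = A.carrier := by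
        rw [← hmap]; exact TPA.image_image θ hAd
      apply NCompact.ext'
      rw [imgNC_carrier (hcarr ▸ A.isCompact'), hcarr]
    have hU' : (h * k, imgNC (θ.map k⁻¹) B) ∈ U := by rw [h1, h2]; exact hpU
    exact ⟨⟨Set.mem_univ _, hBsub⟩, hU'⟩

/-- The graph of the partial action on points. -/
def gamS : Set (G × X × X) :=
  {t | t.2.1 ∈ θ.dom t.1⁻¹ ∧ θ.map t.1 t.2.1 = t.2.2}

/-- The graph of the partial action on compact sets. -/
def gamHS : Set (G × NCompact X × NCompact X) :=
  {t | t.2.1.carrier ⊆ θ.dom t.1⁻¹ ∧ θ.map t.1 '' t.2.1.carrier = t.2.2.carrier}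

lemma gamS_closed (hR : IsClosed {pq : (G × X) × (G × X) | envRel θ pq.1 pq.2}) :
    IsClosed (gamS θ) := by
  have : gamS θ = (fun t : G × X × X => ((t.1, t.2.1), ((1 : G), t.2.2))) ⁻¹'
      {pq : (G × X) × (G × X) | envRel θ pq.1 pq.2} := by
    ext ⟨kk, x, y⟩
    simp [gamS, envRel]
  rw [this]
  exact hR.preimage ((continuous_fst.prodMk (continuous_snd.fst)).prodMk
    (continuous_const.prodMk continuous_snd.snd))

lemma gamHS_closed (hG : IsClosed (gamS θ)) : IsClosed (gamHS θ) := by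
  rw [← isOpen_compl_iff] at hG ⊢
  rw [isOpen_iff_forall_mem_open]
  rintro ⟨k, A, B⟩ hmem
  have hmem' : ¬ (A.carrier ⊆ θ.dom k⁻¹ ∧ θ.map k '' A.carrier = B.carrier) := hmem
  have nbhd : ∀ a b, (k, a, b) ∉ gamS θ → ∃ W V T, IsOpen W ∧ IsOpen V ∧ IsOpen T ∧
      k ∈ W ∧ a ∈ V ∧ b ∈ T ∧
      ∀ k' ∈ W, ∀ a' ∈ V, ∀ b' ∈ T, (k', a', b') ∉ gamS θ := by
    intro a b hab
    obtain ⟨W, P, hW, hP, hkW, habP, hWP⟩ := isOpen_prod_iff.1 hG k (a, b) hab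
    obtain ⟨V, T, hV, hT, haV, hbT, hVT⟩ := isOpen_prod_iff.1 hP a b habP
    exact ⟨W, V, T, hW, hV, hT, hkW, haV, hbT,
      fun k' hk' a' ha' b' hb' => hWP (Set.mk_mem_prod hk' (hVT (Set.mk_mem_prod ha' hb')))⟩
  have key : (∃ a ∈ A.carrier, ∀ b ∈ B.carrier, (k, a, b) ∉ gamS θ)
      ∨ (∃ b ∈ B.carrier, ∀ a ∈ A.carrier, (k, a, b) ∉ gamS θ) := by
    by_cases hsub : A.carrier ⊆ θ.dom k⁻¹
    · by_cases him : θ.map k '' A.carrier ⊆ B.carrier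
      · right
        have hne : θ.map k '' A.carrier ≠ B.carrier := fun he => hmem' ⟨hsub, he⟩
        obtain ⟨b, hbB, hb⟩ := Set.exists_of_ssubset (him.ssubset_of_ne hne)
        exact ⟨b, hbB, fun a haA hg => hb ⟨a, haA, hg.2⟩⟩
      · left
        obtain ⟨y, ⟨a, haA, rfl⟩, hyB⟩ := Set.not_subset.1 him
        exact ⟨a, haA, fun b hbB hg => hyB (hg.2 ▸ hbB)⟩
    · left
      obtain ⟨a, haA, ha⟩ := Set.not_subset.1 hsub
      exact ⟨a, haA, fun b _ hg => ha hg.1⟩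
  rcases key with ⟨a, haA, hall⟩ | ⟨b, hbB, hall⟩
  · -- a fixed element of A with no partner in B
    choose W V T hW hV hT hkW haV hbT hdisj using
      fun b : {b : X // b ∈ B.carrier} => nbhd a b.1 (hall b.1 b.2)
    have hcov : B.carrier ⊆ ⋃ i, T i :=
      fun b hb => Set.mem_iUnion.2 ⟨⟨b, hb⟩, hbT ⟨b, hb⟩⟩
    obtain ⟨t, hcov'⟩ := B.isCompact'.elim_finite_subcover T (fun i => hT i) hcov
    refine ⟨(⋂ i ∈ t, W i) ×ˢ
        ({A' : NCompact X | (A'.carrier ∩ ⋂ i ∈ t, V i).Nonempty} ×ˢ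
          {B' : NCompact X | B'.carrier ⊆ ⋃ i ∈ t, T i}), ?_, ?_, ?_⟩
    · rintro ⟨k', A', B'⟩ ⟨hk', hA'mem, hB'sub⟩ ⟨hsub', him'⟩
      obtain ⟨a', ha'A', ha'V⟩ := hA'mem
      have hb' : θ.map k' a' ∈ B'.carrier := him' ▸ ⟨a', ha'A', rfl⟩
      obtain ⟨i, hit, hbT'⟩ := Set.mem_iUnion₂.1 (hB'sub hb')
      exact hdisj i k' (Set.biInter_subset_of_mem hit hk')
        a' (Set.biInter_subset_of_mem hit ha'V) _ hbT' ⟨hsub' ha'A', rfl⟩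
    · exact (isOpen_biInter_finset (fun i _ => hW i)).prod
        ((isOpen_hit (isOpen_biInter_finset (fun i _ => hV i))).prod
          (isOpen_sub (isOpen_biUnion (fun i _ => hT i))))
    · exact ⟨Set.mem_biInter (fun i _ => hkW i),
        ⟨a, haA, Set.mem_biInter (fun i _ => haV i)⟩, hcov'⟩
  · -- b fixed element of B with no partner in A
    choose W V T hW hV hT hkW haV hbT hdisj using
      fun a : {a : X // a ∈ A.carrier} => nbhd a.1 b (hall a.1 a.2)
    have hcov : A.carrier ⊆ ⋃ i, V i :=
      fun a ha => Set.mem_iUnion.2 ⟨⟨a, ha⟩, haV ⟨a, ha⟩⟩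
    obtain ⟨t, hcov'⟩ := A.isCompact'.elim_finite_subcover V (fun i => hV i) hcov
    refine ⟨(⋂ i ∈ t, W i) ×ˢ
        ({A' : NCompact X | A'.carrier ⊆ ⋃ i ∈ t, V i} ×ˢ
          {B' : NCompact X | (B'.carrier ∩ ⋂ i ∈ t, T i).Nonempty}), ?_, ?_, ?_⟩
    · rintro ⟨k', A', B'⟩ ⟨hk', hA'sub, hB'mem⟩ ⟨hsub', him'⟩
      obtain ⟨b', hb'B', hb'T⟩ := hB'mem
      rw [← him'] at hb'B'
      obtain ⟨a', ha'A', ha'eq⟩ := hb'B'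
      obtain ⟨i, hit, ha'V⟩ := Set.mem_iUnion₂.1 (hA'sub ha'A')
      exact hdisj i k' (Set.biInter_subset_of_mem hit hk')
        a' ha'V b' (Set.biInter_subset_of_mem hit hb'T) ⟨hsub' ha'A', ha'eq⟩
    · exact (isOpen_biInter_finset (fun i _ => hW i)).prod
        ((isOpen_sub (isOpen_biUnion (fun i _ => hV i))).prod
          (isOpen_hit (isOpen_biInter_finset (fun i _ => hT i))))
    · exact ⟨Set.mem_biInter (fun i _ => hkW i), hcov',
        ⟨b, hbB, Set.mem_biInter (fun i _ => hbT i)⟩⟩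

lemma relH_closed (hG : IsClosed (gamHS θ)) :
    IsClosed {pq : (G × NCompact X) × (G × NCompact X) | envRelH θ pq.1 pq.2} := by
  have : {pq : (G × NCompact X) × (G × NCompact X) | envRelH θ pq.1 pq.2}
      = (fun pq : (G × NCompact X) × (G × NCompact X) =>
          (pq.2.1⁻¹ * pq.1.1, pq.1.2, pq.2.2)) ⁻¹' gamHS θ := by
    ext ⟨⟨g, A⟩, ⟨h, B⟩⟩
    simp only [envRelH, gamHS, Set.mem_setOf_eq, Set.mem_preimage, mul_inv_rev, inv_inv]
  rw [this]
  refine hG.preimage ?_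
  exact ((continuous_snd.fst.inv.mul continuous_fst.fst).prodMk
    (continuous_fst.snd.prodMk continuous_snd.snd))

lemma rel_closed_of_relH (hH : IsClosed
    {pq : (G × NCompact X) × (G × NCompact X) | envRelH θ pq.1 pq.2}) :
    IsClosed {pq : (G × X) × (G × X) | envRel θ pq.1 pq.2} := by
  have : {pq : (G × X) × (G × X) | envRel θ pq.1 pq.2}
      = (fun pq : (G × X) × (G × X) =>
          ((pq.1.1, singNC pq.1.2), (pq.2.1, singNC pq.2.2))) ⁻¹'
        {pq : (G × NCompact X) × (G × NCompact X) | envRelH θ pq.1 pq.2} := by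
    ext ⟨p, q⟩
    exact envRel_iff_singNC θ p q
  rw [this]
  refine hH.preimage ?_
  exact ((continuous_fst.fst.prodMk (continuous_singNC.comp continuous_fst.snd)).prodMk
    (continuous_snd.fst.prodMk (continuous_singNC.comp continuous_snd.snd)))

end Theta

/-- Let `θ` be a topological partial action of a topological group `G` on a compact Hausdorff
space `X`, with enveloping space `X_G = (G × X)/R`, and let `2^θ` be the induced partial
action on the hyperspace `2^X`, with enveloping space `(2^X)_G = (G × 2^X)/2^R`.  Then
`X_G` is Hausdorff if and only if `(2^X)_G` is Hausdorff. -/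
theorem t2_envelopingSpace_iff_t2_hyperspace
    {G X : Type*} [Group G] [TopologicalSpace G] [IsTopologicalGroup G]
    [TopologicalSpace X] [CompactSpace X] [T2Space X]
    (θ : TopPartialAction G X) :
    T2Space (Quot (envRel θ)) ↔ T2Space (Quot (envRelH θ)) := by
  rw [t2_quot_iff (envRel_equiv θ) (satOpen θ),
    t2_quot_iff (envRelH_equiv θ) (satOpenH θ)]
  constructor
  · intro h
    exact relH_closed θ (gamHS_closed θ (gamS_closed θ h))
  · intro h
    exact rel_closed_of_relH θ h
end

section
/- Let θ = (θ_g, X_g)_{g∈G} be a topological partial action of a topological group G on a compact Hausdorff space X, with enveloping space X_G, and let 2^θ restricted to the hyperspace F(X) of nonempty finite subsets of X be the induced partial action on F(X), with enveloping space F(X)_G. If X_G is a T1 space, then F(X)_G is a T1 space. -/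
variable {G X : Type*} [Group G] [TopologicalSpace G] [TopologicalSpace X]

/-- The hyperspace `F(X)` of nonempty finite subsets of `X`, with the subspace topology
inherited from the Vietoris topology on `2^X`. -/
def FinHyper (X : Type*) [TopologicalSpace X] : Type _ :=
  {A : NCompact X // A.carrier.Finite}

instance (X : Type*) [TopologicalSpace X] : TopologicalSpace (FinHyper X) :=
  instTopologicalSpaceSubtype

/-- The relation `2^R` on `G × F(X)` defining the enveloping space `F(X)_G` of the induced
partial action on `F(X)`: `(g,A) 2^R (h,B)` iff `A ⊆ X_{g⁻¹h}` and `θ_{h⁻¹g}(A) = B`. -/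
def envRelF (θ : TopPartialAction G X) (p q : G × FinHyper X) : Prop :=
  p.2.1.carrier ⊆ θ.dom (p.1⁻¹ * q.1) ∧ θ.map (q.1⁻¹ * p.1) '' p.2.1.carrier = q.2.1.carrier


section Aux

variable {G X : Type*} [Group G] [TopologicalSpace G] [TopologicalSpace X]

theorem envRel_refl (θ : TopPartialAction G X) (p : G × X) : envRel θ p p := by
  refine ⟨?_, ?_⟩ <;> simp [θ.dom_one, θ.map_one]

theorem envRel_symm {θ : TopPartialAction G X} {p q : G × X} (h : envRel θ p q) :
    envRel θ q p := by
  obtain ⟨g, x⟩ := p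
  obtain ⟨h', y⟩ := q
  obtain ⟨hx, hmap⟩ := h
  simp only [envRel] at *
  have hx' : x ∈ θ.dom (h'⁻¹ * g)⁻¹ := by simpa [mul_inv_rev] using hx
  constructor
  · rw [← θ.image_dom (h'⁻¹ * g)] at *
    rw [← hmap]
    exact Set.mem_image_of_mem _ hx'
  · have := θ.map_inv (h'⁻¹ * g) x hx'
    rw [hmap] at this
    simpa [mul_inv_rev] using this

theorem envRel_trans {θ : TopPartialAction G X} {p q r : G × X}
    (h1 : envRel θ p q) (h2 : envRel θ q r) : envRel θ p r := by
  obtain ⟨g, x⟩ := p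
  obtain ⟨h, y⟩ := q
  obtain ⟨k, z⟩ := r
  obtain ⟨hy', hmap'⟩ := envRel_symm h1
  obtain ⟨hx, hmap⟩ := h1
  obtain ⟨hy, hmap2⟩ := h2
  simp only [envRel] at *
  have hxmem : x ∈ θ.dom (g⁻¹ * h) ∩ θ.dom (g⁻¹ * h * (h⁻¹ * k)) := by
    rw [← θ.image_inter (g⁻¹ * h) (h⁻¹ * k)]
    refine ⟨y, ⟨?_, hy⟩, hmap'⟩
    simpa [mul_inv_rev] using hy'
  have hxk : x ∈ θ.dom (g⁻¹ * k) := by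
    have := hxmem.2
    simpa [mul_assoc] using this
  refine ⟨hxk, ?_⟩
  have hmm := θ.map_mul (k⁻¹ * h) (h⁻¹ * g) x ?_
  · rw [hmap] at hmm
    rw [hmap2] at hmm
    have : k⁻¹ * h * (h⁻¹ * g) = k⁻¹ * g := by group
    rw [this] at hmm
    exact hmm.symm
  · constructor
    · simpa [mul_inv_rev] using hx
    · have : (k⁻¹ * h * (h⁻¹ * g))⁻¹ = g⁻¹ * k := by group
      rw [this]
      exact hxk

theorem envRel_equivalence (θ : TopPartialAction G X) : Equivalence (envRel θ) :=
  ⟨envRel_refl θ, envRel_symm, envRel_trans⟩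

theorem envRelF_iff (θ : TopPartialAction G X) (g h : G) (A B : FinHyper X) :
    envRelF θ (g, A) (h, B) ↔
      (∀ x ∈ A.1.carrier, ∃ y ∈ B.1.carrier, envRel θ (g, x) (h, y)) ∧
      (∀ y ∈ B.1.carrier, ∃ x ∈ A.1.carrier, envRel θ (g, x) (h, y)) := by
  constructor
  · rintro ⟨hsub, himg⟩
    constructor
    · intro x hx
      exact ⟨θ.map (h⁻¹ * g) x, himg ▸ Set.mem_image_of_mem _ hx, hsub hx, rfl⟩
    · intro y hy
      rw [← himg] at hy
      obtain ⟨x, hx, hxy⟩ := hy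
      exact ⟨x, hx, hsub hx, hxy⟩
  · rintro ⟨h1, h2⟩
    constructor
    · intro x hx
      obtain ⟨y, _, hmem, _⟩ := h1 x hx
      exact hmem
    · apply Set.Subset.antisymm
      · rintro _ ⟨x, hx, rfl⟩
        obtain ⟨y, hy, _, heq⟩ := h1 x hx
        exact heq ▸ hy
      · intro y hy
        obtain ⟨x, hx, _, heq⟩ := h2 y hy
        exact ⟨x, hx, heq⟩

theorem envRelF_refl (θ : TopPartialAction G X) (p : G × FinHyper X) : envRelF θ p p := by
  obtain ⟨g, A⟩ := p
  rw [envRelF_iff]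
  exact ⟨fun x hx => ⟨x, hx, envRel_refl θ (g, x)⟩, fun x hx => ⟨x, hx, envRel_refl θ (g, x)⟩⟩

theorem envRelF_symm {θ : TopPartialAction G X} {p q : G × FinHyper X}
    (h : envRelF θ p q) : envRelF θ q p := by
  obtain ⟨g, A⟩ := p; obtain ⟨h', B⟩ := q
  rw [envRelF_iff] at *
  exact ⟨fun y hy => (h.2 y hy).imp fun x hx => ⟨hx.1, envRel_symm hx.2⟩,
    fun x hx => (h.1 x hx).imp fun y hy => ⟨hy.1, envRel_symm hy.2⟩⟩

theorem envRelF_trans {θ : TopPartialAction G X} {p q r : G × FinHyper X}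
    (h1 : envRelF θ p q) (h2 : envRelF θ q r) : envRelF θ p r := by
  obtain ⟨g, A⟩ := p; obtain ⟨h', B⟩ := q; obtain ⟨k, C⟩ := r
  rw [envRelF_iff] at *
  constructor
  · intro x hx
    obtain ⟨y, hy, hr⟩ := h1.1 x hx
    obtain ⟨z, hz, hr2⟩ := h2.1 y hy
    exact ⟨z, hz, envRel_trans hr hr2⟩
  · intro z hz
    obtain ⟨y, hy, hr2⟩ := h2.2 z hz
    obtain ⟨x, hx, hr⟩ := h1.2 y hy
    exact ⟨x, hx, envRel_trans hr hr2⟩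

theorem envRelF_equivalence (θ : TopPartialAction G X) : Equivalence (envRelF θ) :=
  ⟨envRelF_refl θ, envRelF_symm, envRelF_trans⟩

theorem isOpen_finHyper_subset {U : Set X} (hU : IsOpen U) :
    IsOpen {B : FinHyper X | B.1.carrier ⊆ U} := by
  have : IsOpen {A : NCompact X | A.carrier ⊆ U} :=
    TopologicalSpace.isOpen_generateFrom_of_mem ⟨U, hU, Or.inl rfl⟩
  exact this.preimage continuous_subtype_val

theorem isOpen_finHyper_inter {U : Set X} (hU : IsOpen U) :
    IsOpen {B : FinHyper X | (B.1.carrier ∩ U).Nonempty} := by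
  have : IsOpen {A : NCompact X | (A.carrier ∩ U).Nonempty} :=
    TopologicalSpace.isOpen_generateFrom_of_mem ⟨U, hU, Or.inr rfl⟩
  exact this.preimage continuous_subtype_val

theorem isClosed_envRel_class (θ : TopPartialAction G X)
    (hT1 : T1Space (Quot (envRel θ))) (p : G × X) :
    IsClosed {q : G × X | envRel θ p q} := by
  have heq : {q : G × X | envRel θ p q} = Quot.mk (envRel θ) ⁻¹' {Quot.mk (envRel θ) p} := by
    ext q
    simp only [Set.mem_setOf_eq, Set.mem_preimage, Set.mem_singleton_iff, Quot.eq]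
    rw [(envRel_equivalence θ).eqvGen_iff]
    exact ⟨fun h => envRel_symm h, fun h => envRel_symm h⟩
  rw [heq]
  exact isClosed_singleton.preimage continuous_quot_mk

end Aux

/-- Let `θ` be a topological partial action of a topological group `G` on a compact Hausdorff
space `X`, with enveloping space `X_G`, and let `F(X)_G` be the enveloping space of the
induced partial action on the hyperspace `F(X)` of nonempty finite subsets of `X`.  If
`X_G` is `T1`, then `F(X)_G` is `T1`. -/
theorem t1_envelopingSpace_finiteHyperspace
    {G X : Type*} [Group G] [TopologicalSpace G] [IsTopologicalGroup G]
    [TopologicalSpace X] [CompactSpace X] [T2Space X]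
    (θ : TopPartialAction G X)
    (hT1 : T1Space (Quot (envRel θ))) :
    T1Space (Quot (envRelF θ)) := by
  constructor
  intro pbar
  induction pbar using Quot.ind with
  | _ p =>
  obtain ⟨g, A⟩ := p
  rw [← isQuotientMap_quot_mk.isClosed_preimage]
  have heq : Quot.mk (envRelF θ) ⁻¹' {Quot.mk (envRelF θ) (g, A)}
      = {q : G × FinHyper X | envRelF θ (g, A) q} := by
    ext q
    simp only [Set.mem_setOf_eq, Set.mem_preimage, Set.mem_singleton_iff, Quot.eq]
    rw [(envRelF_equivalence θ).eqvGen_iff]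
    exact ⟨fun h => envRelF_symm h, fun h => envRelF_symm h⟩
  rw [heq, ← isOpen_compl_iff, isOpen_iff_forall_mem_open]
  rintro ⟨h, B⟩ hmem
  simp only [Set.mem_compl_iff, Set.mem_setOf_eq, envRelF_iff, not_and_or] at hmem
  rcases hmem with h1 | h2
  · -- some x ∈ A has no partner in B
    push_neg at h1
    obtain ⟨x, hxA, hx⟩ := h1
    have hEc : IsClosed {q : G × X | envRel θ (g, x) q} := isClosed_envRel_class θ hT1 _
    have hsub : ({h} : Set G) ×ˢ B.1.carrier ⊆ {q : G × X | envRel θ (g, x) q}ᶜ := by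
      rintro ⟨h', y⟩ ⟨hh', hy⟩
      simp only [Set.mem_singleton_iff] at hh'
      subst hh'
      exact hx y hy
    obtain ⟨V, U, hV, hU, hhV, hBU, hVU⟩ :=
      generalized_tube_lemma isCompact_singleton B.1.isCompact' hEc.isOpen_compl hsub
    refine ⟨V ×ˢ {B' : FinHyper X | B'.1.carrier ⊆ U}, ?_, ?_, ?_⟩
    · rintro ⟨h', B'⟩ ⟨hh', hB'⟩ hrel
      rw [Set.mem_setOf_eq, envRelF_iff] at hrel
      obtain ⟨y', hy', hr⟩ := hrel.1 x hxA
      exact hVU (Set.mk_mem_prod hh' (hB' hy')) hr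
    · exact hV.prod (isOpen_finHyper_subset hU)
    · exact ⟨hhV rfl, hBU⟩
  · -- some y ∈ B has no partner in A
    push_neg at h2
    obtain ⟨y, hyB, hy⟩ := h2
    have hFc : IsClosed (⋃ x ∈ A.1.carrier, {q : G × X | envRel θ (g, x) q}) :=
      A.2.isClosed_biUnion fun x _ => isClosed_envRel_class θ hT1 _
    have hmem' : (h, y) ∈ (⋃ x ∈ A.1.carrier, {q : G × X | envRel θ (g, x) q})ᶜ := by
      simp only [Set.mem_compl_iff, Set.mem_iUnion, Set.mem_setOf_eq, not_exists]
      exact fun x hx => hy x hx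
    obtain ⟨V, W, hV, hW, hhV, hyW, hVW⟩ :=
      isOpen_prod_iff.mp hFc.isOpen_compl h y hmem'
    refine ⟨V ×ˢ {B' : FinHyper X | (B'.1.carrier ∩ W).Nonempty}, ?_, ?_, ?_⟩
    · rintro ⟨h', B'⟩ ⟨hh', hB'⟩ hrel
      rw [Set.mem_setOf_eq, envRelF_iff] at hrel
      obtain ⟨y', hy'B, hy'W⟩ := hB'
      obtain ⟨x, hxA, hr⟩ := hrel.2 y' hy'B
      have : (h', y') ∈ (⋃ x ∈ A.1.carrier, {q : G × X | envRel θ (g, x) q})ᶜ :=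
        hVW (Set.mk_mem_prod hh' hy'W)
      exact this (Set.mem_biUnion hxA hr)
    · exact hV.prod (isOpen_finHyper_inter hW)
    · exact ⟨hhV, y, hyB, hyW⟩
end
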